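/- Let 1 ≤ N < L be integers, let a be an integer, and let f_1,…,f_N be nonzero complex numbers. For 1 ≤ m ≤ n ≤ N write F_{m,n} = ∏_{j=m}^{n} f_j, and assume F_{m,n} ≠ 1 for all 2 ≤ m ≤ n ≤ N. Then ∑_{X ∈ 𝒳_N(L), x_1 = a} ∏_{j=1}^N f_j^{x_j−j} = ∑_{k=0}^{N−1} ∑_{1 < s_1 < ⋯ < s_k ≤ N} [ F_{1,s_1−1}^{a−1} / ∏_{j=2}^{s_1−1} (1 − F_{j,s_1−1}) ] · ∏_{i=1}^{k} [ F_{s_i,s_{i+1}−1}^{a+L−N−1} / ( (1 − F_{s_i,s_{i+1}−1}^{−1}) ∏_{j=s_i+1}^{s_{i+1}−1} (1 − F_{j,s_{i+1}−1}) ) ], where s_{k+1} := N+1, the inner sum is over all subsets {s_1 < ⋯ < s_k} of {2,…,N} of size k, all powers are integer powers, and the k = 0 term is F_{1,N}^{a−1} / ∏_{j=2}^{N} (1 − F_{j,N}). -/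

import Mathlib

open scoped BigOperators

/-- The configuration space `𝒳_N(L)`: strictly increasing `N`-tuples of integers
whose entries all lie within a window of length `L` (equivalently,
`x_1 < x_2 < ⋯ < x_N < x_1 + L`). -/
def XNL (N L : ℕ) : Set (Fin N → ℤ) :=
  {X | StrictMono X ∧ ∀ i j, X i < X j + (L : ℤ)}

namespace SumX1

/-- Product `F_{m,n} = ∏_{j=m}^n f j`. -/
def Fp (f : ℕ → ℂ) (m n : ℕ) : ℂ := ∏ j ∈ Finset.Icc m n, f j

lemma Fp_self (f : ℕ → ℂ) (n : ℕ) : Fp f n n = f n := by simp [Fp]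

lemma Fp_cons (f : ℕ → ℂ) {m n : ℕ} (h : m ≤ n) : f m * Fp f (m+1) n = Fp f m n := by
  rw [Fp, Fp, Finset.Icc_add_one_left_eq_Ioc, ← Finset.Ioc_insert_left h, Finset.prod_insert (by simp)]

lemma Fp_ne_zero {f : ℕ → ℂ} {N : ℕ} (hf : ∀ j, 1 ≤ j → j ≤ N → f j ≠ 0)
    {m n : ℕ} (hm : 1 ≤ m) (hn : n ≤ N) : Fp f m n ≠ 0 := by
  rw [Fp, Finset.prod_ne_zero_iff]
  intro j hj
  rw [Finset.mem_Icc] at hj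
  exact hf j (by omega) (by omega)

/-- multiplied geometric sum over `Icc b c` with integer exponents. -/
lemma geom (w : ℂ) (hw : w ≠ 0) {b c : ℤ} (hb : b ≤ c) :
    (1 - w) * ∑ t ∈ Finset.Icc b c, w ^ t = w ^ b - w ^ (c + 1) := by
  obtain ⟨n, rfl⟩ : ∃ n : ℕ, c = b + n := ⟨(c-b).toNat, by omega⟩
  clear hb
  induction n with
  | zero =>
      rw [Nat.cast_zero, add_zero, Finset.Icc_self, Finset.sum_singleton, zpow_add_one₀ hw]
      ring
  | succ n ih =>
      have hc : b + (n+1 : ℕ) = (b + n) + 1 := by push_cast; ring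
      rw [hc]
      have hins : Finset.Icc b (b + n + 1) = insert (b + n + 1) (Finset.Icc b (b + n)) := by
        ext x; simp only [Finset.mem_Icc, Finset.mem_insert]; omega
      rw [hins, Finset.sum_insert (by simp), mul_add, ih, zpow_add_one₀ hw (b + n + 1)]
      ring

/-- `Ch g c k m b` = sum over chains `b ≤ y_m ≤ y_{m+1} ≤ ⋯ ≤ y_{m+k-1} ≤ c`
of `∏_j g j ^ y_j`. -/
noncomputable def Ch (g : ℕ → ℂ) (c : ℤ) : ℕ → ℕ → ℤ → ℂ
  | 0, _, _ => 1
  | (k+1), m, b => ∑ t ∈ Finset.Icc b c, g m ^ t * Ch g c k (m+1) t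

lemma Ch_zero (g : ℕ → ℂ) (c : ℤ) (m : ℕ) (b : ℤ) : Ch g c 0 m b = 1 := rfl

lemma Ch_succ (g : ℕ → ℂ) (c : ℤ) (k m : ℕ) (b : ℤ) :
    Ch g c (k+1) m b = ∑ t ∈ Finset.Icc b c, g m ^ t * Ch g c k (m+1) t := rfl

lemma Ch_one (g : ℕ → ℂ) (c : ℤ) (m : ℕ) (b : ℤ) :
    Ch g c 1 m b = ∑ t ∈ Finset.Icc b c, g m ^ t := by
  rw [Ch_succ]; simp [Ch_zero]

lemma Ch_congr (g g' : ℕ → ℂ) (c : ℤ) :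
    ∀ k m b, (∀ j, m ≤ j → j < m + k → g j = g' j) → Ch g c k m b = Ch g' c k m b := by
  intro k
  induction k with
  | zero => intro m b _; rfl
  | succ k ih =>
      intro m b h
      simp only [Ch]
      refine Finset.sum_congr rfl fun t _ => ?_
      rw [h m (le_refl m) (by omega), ih (m+1) t (fun j h1 h2 => h j (by omega) (by omega))]

/-- Peeling the top variable of a chain sum. -/
lemma Ch_peel (g : ℕ → ℂ) (c : ℤ) :
    ∀ k m b, 1 ≤ k → g (m+k) ≠ 0 → b ≤ c →
    (1 - g (m+k)) * Ch g c (k+1) m b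
      = Ch (Function.update g (m+k-1) (g (m+k-1) * g (m+k))) c k m b
        - g (m+k) ^ (c+1) * Ch g c k m b := by
  intro k
  induction k with
  | zero => omega
  | succ k ih =>
      intro m b _ hg hb
      rcases Nat.eq_zero_or_pos k with rfl | hk
      · -- base : k+1 = 1
        have hm1 : m + (0+1) = m + 1 := rfl
        rw [hm1] at hg ⊢
        have hupd : Function.update g (m+1-1) (g (m+1-1) * g (m+1)) m = g m * g (m+1) := by
          simp
        rw [show (0:ℕ)+1+1 = 1+1 from rfl, Ch_succ, Ch_one, Ch_one, Finset.mul_sum]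
        have key : ∀ t ∈ Finset.Icc b c,
            (1 - g (m+1)) * (g m ^ t * Ch g c 1 (m+1) t)
              = (g m * g (m+1)) ^ t - g (m+1) ^ (c+1) * g m ^ t := by
          intro t ht
          rw [Finset.mem_Icc] at ht
          rw [Ch_one, mul_left_comm, geom (g (m+1)) hg ht.2, mul_zpow]
          ring
        rw [Finset.sum_congr rfl key, Finset.sum_sub_distrib, ← Finset.mul_sum]
        congr 1
        refine (Finset.sum_congr rfl fun t _ => ?_).symm
        rw [hupd]
      · -- step
        have hg' : g ((m+1) + k) ≠ 0 := by
          have h : (m+1) + k = m + (k+1) := by omega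
          rw [h]; exact hg
        rw [Ch_succ g c (k+1) m b, Ch_succ _ c k m b, Ch_succ g c k m b,
          Finset.mul_sum]
        have key : ∀ t ∈ Finset.Icc b c,
            (1 - g (m + (k+1))) * (g m ^ t * Ch g c (k+1) (m+1) t)
              = g m ^ t * Ch (Function.update g (m+(k+1)-1) (g (m+(k+1)-1) * g (m+(k+1)))) c k ((m+1)) t
                - g (m+(k+1)) ^ (c+1) * (g m ^ t * Ch g c k (m+1) t) := by
          intro t ht
          rw [Finset.mem_Icc] at ht
          have h2 := ih (m+1) t (by omega) hg' ht.2
          have harith : (m+1) + k = m + (k+1) := by omega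
          rw [harith] at h2
          calc (1 - g (m + (k+1))) * (g m ^ t * Ch g c (k+1) (m+1) t)
              = g m ^ t * ((1 - g (m + (k+1))) * Ch g c (k+1) (m+1) t) := by ring
            _ = _ := by rw [h2]; ring
        rw [Finset.sum_congr rfl key, Finset.sum_sub_distrib, ← Finset.mul_sum]
        congr 1
        · refine (Finset.sum_congr rfl fun t _ => ?_).symm
          rw [Function.update_of_ne (by omega)]
/-- `nxt S e j`: (least element of `S` greater than `j`) minus 1, or `e` if none. -/
def nxt (S : Finset ℕ) (e j : ℕ) : ℕ :=
  if h : (S.filter (fun m => j < m)).Nonempty then (S.filter (fun m => j < m)).min' h - 1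
  else e

/-- The per-subset term of the expansion, at stage `n` with current top end `e`. -/
noncomputable def W (f : ℕ → ℂ) (a c : ℤ) (S : Finset ℕ) (n e : ℕ) : ℂ :=
  (Fp f 1 (nxt S e 1)) ^ (a-1) *
    ∏ j ∈ Finset.Icc 2 n,
      (if j ∈ S then (Fp f j (nxt S e j)) ^ c * (1 - (Fp f j (nxt S e j))⁻¹)⁻¹
       else (1 - Fp f j (nxt S e j))⁻¹)

lemma nxt_top {S : Finset ℕ} {j : ℕ} (h : ∀ x ∈ S, ¬ j < x) (e : ℕ) : nxt S e j = e := by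
  unfold nxt
  rw [dif_neg]
  rw [Finset.not_nonempty_iff_eq_empty, Finset.filter_eq_empty_iff]
  exact h

lemma nxt_insert {S : Finset ℕ} {n : ℕ} (hS : ∀ x ∈ S, x < n) {j : ℕ} (hj : j < n) (e : ℕ) :
    nxt (insert n S) e j = nxt S (n-1) j := by
  classical
  have hfil : (insert n S).filter (fun m => j < m) = insert n (S.filter (fun m => j < m)) := by
    rw [Finset.filter_insert, if_pos hj]
  unfold nxt
  rw [hfil, dif_pos ⟨n, Finset.mem_insert_self _ _⟩]
  rcases (S.filter (fun m => j < m)).eq_empty_or_nonempty with he | hne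
  · rw [he, dif_neg (by simp)]
    simp
  · rw [dif_pos hne, Finset.min'_insert n _ hne]
    have hlt : (S.filter (fun m => j < m)).min' hne < n :=
      hS _ (Finset.mem_filter.mp ((S.filter (fun m => j < m)).min'_mem hne)).1
    rw [min_eq_right (le_of_lt hlt)]

lemma W_notmem (f : ℕ → ℂ) (a c : ℤ) {S : Finset ℕ} {n : ℕ} (e : ℕ) (hn : 2 ≤ n)
    (hS : S ⊆ Finset.Icc 2 (n-1)) :
    W f a c S n e = (1 - Fp f n e)⁻¹ * W f a c S (n-1) e := by
  have hb : ∀ x ∈ S, x < n := fun x hx => by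
    have := Finset.mem_Icc.mp (hS hx); omega
  have hsplit : Finset.Icc 2 n = insert n (Finset.Icc 2 (n-1)) := by
    ext x; simp only [Finset.mem_Icc, Finset.mem_insert]; omega
  have hnot : n ∉ Finset.Icc 2 (n-1) := by simp only [Finset.mem_Icc]; omega
  rw [W, W, hsplit, Finset.prod_insert hnot,
    if_neg (fun h => absurd (hb n h) (lt_irrefl n)),
    nxt_top (fun x hx => not_lt_of_gt (hb x hx)) e]
  ring

lemma W_mem (f : ℕ → ℂ) (a c : ℤ) {S : Finset ℕ} {n : ℕ} (e : ℕ) (hn : 2 ≤ n)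
    (hS : S ⊆ Finset.Icc 2 (n-1)) :
    W f a c (insert n S) n e
      = (Fp f n e) ^ c * (1 - (Fp f n e)⁻¹)⁻¹ * W f a c S (n-1) (n-1) := by
  have hb : ∀ x ∈ S, x < n := fun x hx => by
    have := Finset.mem_Icc.mp (hS hx); omega
  have hb' : ∀ x ∈ insert n S, ¬ n < x := by
    intro x hx
    rcases Finset.mem_insert.mp hx with rfl | hx
    · exact lt_irrefl x
    · exact not_lt_of_gt (lt_of_lt_of_le (hb x hx) (le_refl n))
  have hsplit : Finset.Icc 2 n = insert n (Finset.Icc 2 (n-1)) := by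
    ext x; simp only [Finset.mem_Icc, Finset.mem_insert]; omega
  have hnot : n ∉ Finset.Icc 2 (n-1) := by simp only [Finset.mem_Icc]; omega
  rw [W, W, hsplit, Finset.prod_insert hnot, if_pos (Finset.mem_insert_self n S),
    nxt_top hb' e, nxt_insert hb (by omega) e]
  have hprod : ∀ j ∈ Finset.Icc 2 (n-1),
      (if j ∈ insert n S then (Fp f j (nxt (insert n S) e j)) ^ c * (1 - (Fp f j (nxt (insert n S) e j))⁻¹)⁻¹
       else (1 - Fp f j (nxt (insert n S) e j))⁻¹)
      = (if j ∈ S then (Fp f j (nxt S (n-1) j)) ^ c * (1 - (Fp f j (nxt S (n-1) j))⁻¹)⁻¹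
       else (1 - Fp f j (nxt S (n-1) j))⁻¹) := by
    intro j hj
    have hjn : j < n := by have := Finset.mem_Icc.mp hj; omega
    rw [nxt_insert hb hjn e]
    exact if_congr ⟨fun h => (Finset.mem_insert.mp h).resolve_left (by omega),
      fun h => Finset.mem_insert_of_mem h⟩ rfl rfl
  rw [Finset.prod_congr rfl hprod]
  ring

/-- `W`-recursion when inserting a new maximum, both stage indices at the top. -/
lemma W_max (f : ℕ → ℂ) (a c : ℤ) {S : Finset ℕ} {m E : ℕ} (hm : 2 ≤ m)
    (hS : S ⊆ Finset.Icc 2 (m-1)) (hE : m ≤ E) :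
    W f a c (insert m S) E E
      = (Fp f m E) ^ c * (1 - (Fp f m E)⁻¹)⁻¹ *
          (∏ j ∈ Finset.Icc (m+1) E, (1 - Fp f j E)⁻¹) * W f a c S (m-1) (m-1) := by
  have hb : ∀ x ∈ S, x < m := fun x hx => by
    have := Finset.mem_Icc.mp (hS hx); omega
  have hb' : ∀ x ∈ insert m S, x ≤ m := by
    intro x hx
    rcases Finset.mem_insert.mp hx with rfl | hx
    · exact le_refl x
    · exact le_of_lt (hb x hx)
  have hsplit : Finset.Icc 2 E = (Finset.Icc 2 (m-1) ∪ {m}) ∪ Finset.Icc (m+1) E := by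
    ext x
    simp only [Finset.mem_Icc, Finset.mem_union, Finset.mem_singleton]
    omega
  have hd1 : Disjoint (Finset.Icc 2 (m-1) ∪ {m}) (Finset.Icc (m+1) E) := by
    rw [Finset.disjoint_left]
    intro x hx hx'
    simp only [Finset.mem_Icc, Finset.mem_union, Finset.mem_singleton] at hx hx'
    omega
  have hd2 : Disjoint (Finset.Icc 2 (m-1)) ({m} : Finset ℕ) := by
    rw [Finset.disjoint_left]
    intro x hx hx'
    simp only [Finset.mem_Icc] at hx
    simp only [Finset.mem_singleton] at hx'
    omega
  rw [W, W, hsplit, Finset.prod_union hd1, Finset.prod_union hd2,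
    Finset.prod_singleton, if_pos (Finset.mem_insert_self m S),
    nxt_top (j := m) (fun x hx => by have := hb' x hx; omega) E,
    nxt_insert hb (by omega) E]
  have hprod1 : ∀ j ∈ Finset.Icc 2 (m-1),
      (if j ∈ insert m S then (Fp f j (nxt (insert m S) E j)) ^ c * (1 - (Fp f j (nxt (insert m S) E j))⁻¹)⁻¹
       else (1 - Fp f j (nxt (insert m S) E j))⁻¹)
      = (if j ∈ S then (Fp f j (nxt S (m-1) j)) ^ c * (1 - (Fp f j (nxt S (m-1) j))⁻¹)⁻¹
       else (1 - Fp f j (nxt S (m-1) j))⁻¹) := by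
    intro j hj
    have hjm : j < m := by have := Finset.mem_Icc.mp hj; omega
    rw [nxt_insert hb hjm E]
    exact if_congr ⟨fun h => (Finset.mem_insert.mp h).resolve_left (by omega),
      fun h => Finset.mem_insert_of_mem h⟩ rfl rfl
  have hprod2 : ∀ j ∈ Finset.Icc (m+1) E,
      (if j ∈ insert m S then (Fp f j (nxt (insert m S) E j)) ^ c * (1 - (Fp f j (nxt (insert m S) E j))⁻¹)⁻¹
       else (1 - Fp f j (nxt (insert m S) E j))⁻¹)
      = (1 - Fp f j E)⁻¹ := by
    intro j hj
    have hjm : m < j := by have := Finset.mem_Icc.mp hj; omega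
    have hnot : j ∉ insert m S := fun h => by have := hb' j h; omega
    rw [if_neg hnot, nxt_top (j := j) (fun x hx => by have := hb' x hx; omega) E]
  rw [Finset.prod_congr rfl hprod1, Finset.prod_congr rfl hprod2]
  ring
lemma alg (w : ℂ) (c : ℤ) (h0 : w ≠ 0) (h1 : w ≠ 1) (x : ℂ) :
    (x - w ^ (c+1)) * (1-w)⁻¹ = x * (1-w)⁻¹ + w ^ c * (1 - w⁻¹)⁻¹ := by
  have h2 : (1:ℂ) - w ≠ 0 := sub_ne_zero.mpr (Ne.symm h1)
  have h3 : (1:ℂ) - w⁻¹ ≠ 0 := sub_ne_zero.mpr (Ne.symm (by rwa [Ne, inv_eq_one]))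
  have hrepr : 1 - w⁻¹ = -((1 - w) * w⁻¹) := by
    field_simp; ring
  rw [zpow_add_one₀ h0, hrepr, inv_neg, mul_inv, inv_inv]
  ring

lemma main (f : ℕ → ℂ) (a c : ℤ) {N : ℕ} (hf : ∀ j, 1 ≤ j → j ≤ N → f j ≠ 0)
    (hF : ∀ m n, 2 ≤ m → m ≤ n → n ≤ N → Fp f m n ≠ 1) (hac : a - 1 ≤ c) :
    ∀ n, 2 ≤ n → ∀ e, n ≤ e → e ≤ N →
      f 1 ^ (a-1) * Ch (Function.update f n (Fp f n e)) c (n-1) 2 (a-1)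
        = ∑ S ∈ (Finset.Icc 2 n).powerset, W f a c S n e := by
  intro n hn
  induction n, hn using Nat.le_induction with
  | base =>
      intro e he heN
      set w := Fp f 2 e with hw
      have hw0 : w ≠ 0 := Fp_ne_zero hf (by omega) heN
      have hw1 : w ≠ 1 := hF 2 e (by omega) he heN
      have h2 : (1:ℂ) - w ≠ 0 := sub_ne_zero.mpr (Ne.symm hw1)
      have hCh : Ch (Function.update f 2 w) c 1 2 (a-1) = ∑ t ∈ Finset.Icc (a-1) c, w ^ t := by
        rw [Ch_one]
        refine Finset.sum_congr rfl fun t _ => ?_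
        rw [Function.update_self]
      have hgeom := geom w hw0 hac
      have hsum : ∑ t ∈ Finset.Icc (a-1) c, w ^ t = (w ^ (a-1) - w ^ (c+1)) * (1-w)⁻¹ := by
        field_simp
        linear_combination hgeom
      -- RHS
      have hIcc : Finset.Icc 2 2 = insert 2 (∅ : Finset ℕ) := by
        ext x; simp only [Finset.mem_Icc, Finset.mem_insert, Finset.notMem_empty, or_false]
        omega
      rw [hIcc, Finset.sum_powerset_insert (Finset.notMem_empty 2),
        Finset.powerset_empty, Finset.sum_singleton, Finset.sum_singleton]
      -- compute the two W values
      have hW0 : W f a c ∅ 2 e = Fp f 1 e ^ (a-1) * (1 - w)⁻¹ := by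
        rw [W, nxt_top (j := 1) (by simp) e]
        rw [Finset.Icc_self, Finset.prod_singleton, if_neg (Finset.notMem_empty 2),
          nxt_top (j := 2) (by simp) e]
      have hW2 : W f a c (insert 2 ∅) 2 e = f 1 ^ (a-1) * (w ^ c * (1 - w⁻¹)⁻¹) := by
        rw [W]
        have hn1 : nxt (insert 2 ∅) e 1 = 1 := by
          unfold nxt
          rw [Finset.filter_insert, if_pos (by omega), Finset.filter_empty]
          rw [dif_pos ⟨2, Finset.mem_insert_self 2 ∅⟩]
          simp
        have hn2 : nxt (insert 2 ∅) e 2 = e := nxt_top (j := 2) (by simp) e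
        rw [hn1, Fp_self, Finset.Icc_self, Finset.prod_singleton,
          if_pos (Finset.mem_insert_self 2 ∅), hn2]
      rw [hW0, hW2, hCh, hsum]
      have hFp1e : Fp f 1 e = f 1 * w := (Fp_cons f (by omega)).symm
      rw [hFp1e, mul_zpow, alg w c hw0 hw1 (w ^ (a-1))]
      ring
  | succ n hn ih =>
      intro e he heN
      set w := Fp f (n+1) e with hw
      have hw0 : w ≠ 0 := Fp_ne_zero hf (by omega) heN
      have hw1 : w ≠ 1 := hF (n+1) e (by omega) he heN
      have h2 : (1:ℂ) - w ≠ 0 := sub_ne_zero.mpr (Ne.symm hw1)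
      set g := Function.update f (n+1) w with hg
      have hgn1 : g (n+1) = w := Function.update_self _ _ _
      have harith : 2 + (n-1) = n + 1 := by omega
      have hpeel := Ch_peel g c (n-1) 2 (a-1) (by omega) (by rw [harith, hgn1]; exact hw0) hac
      rw [harith] at hpeel
      have hfuel : n - 1 + 1 = n := by omega
      rw [hfuel] at hpeel
      rw [hgn1] at hpeel
      -- identify the two chain sums with update-forms
      have hupdval : g (n+1-1) * w = Fp f n e := by
        have : n + 1 - 1 = n := rfl
        rw [this, hg, Function.update_of_ne (by omega), Fp_cons f (by omega)]
      have hCh1 : Ch (Function.update g (n+1-1) (g (n+1-1) * w)) c (n-1) 2 (a-1)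
          = Ch (Function.update f n (Fp f n e)) c (n-1) 2 (a-1) := by
        apply Ch_congr
        intro j hj1 hj2
        have hjn : j ≤ n := by omega
        show Function.update g n (g n * w) j = Function.update f n (Fp f n e) j
        rcases eq_or_ne j n with rfl | hne
        · rw [Function.update_self, Function.update_self]
          exact hupdval
        · rw [Function.update_of_ne hne, Function.update_of_ne hne,
            hg, Function.update_of_ne (by omega)]
      have hCh2 : Ch g c (n-1) 2 (a-1) = Ch (Function.update f n (Fp f n n)) c (n-1) 2 (a-1) := by
        apply Ch_congr
        intro j hj1 hj2
        have hjn : j ≤ n := by omega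
        rcases eq_or_ne j n with rfl | hne
        · rw [hg, Function.update_of_ne (by omega), Function.update_self, Fp_self]
        · rw [hg, Function.update_of_ne (by omega), Function.update_of_ne hne]
      rw [hCh1, hCh2] at hpeel
      -- solve for the chain sum
      have hsolve : Ch g c n 2 (a-1)
          = (Ch (Function.update f n (Fp f n e)) c (n-1) 2 (a-1)
              - w ^ (c+1) * Ch (Function.update f n (Fp f n n)) c (n-1) 2 (a-1)) * (1-w)⁻¹ := by
        rw [← hpeel]
        field_simp
      have goalLHS : f 1 ^ (a-1) * Ch g c (n+1-1) 2 (a-1)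
          = (f 1 ^ (a-1) * Ch (Function.update f n (Fp f n e)) c (n-1) 2 (a-1)) * (1-w)⁻¹
            + w ^ c * (1-w⁻¹)⁻¹ * (f 1 ^ (a-1) * Ch (Function.update f n (Fp f n n)) c (n-1) 2 (a-1)) := by
        show f 1 ^ (a-1) * Ch g c n 2 (a-1) = _
        rw [hsolve]
        linear_combination (f 1 ^ (a-1) * Ch (Function.update f n (Fp f n n)) c (n-1) 2 (a-1))
          * alg w c hw0 hw1 0
      rw [goalLHS, ih e (by omega) heN, ih n (le_refl n) (by omega)]
      -- now the powerset side
      have hIcc : Finset.Icc 2 (n+1) = insert (n+1) (Finset.Icc 2 n) := by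
        ext x; simp only [Finset.mem_Icc, Finset.mem_insert]; omega
      have hnotmem : (n+1) ∉ Finset.Icc 2 n := by simp
      rw [hIcc, Finset.sum_powerset_insert hnotmem]
      congr 1
      · rw [Finset.sum_mul]
        refine Finset.sum_congr rfl fun S hS => ?_
        rw [Finset.mem_powerset] at hS
        rw [W_notmem f a c (S := S) (n := n+1) e (by omega) (by simpa using hS)]
        simp only [Nat.add_sub_cancel]
        try rw [← hw]
        try ring
      · rw [Finset.mul_sum]
        refine Finset.sum_congr rfl fun S hS => ?_
        rw [Finset.mem_powerset] at hS
        rw [W_mem f a c (S := S) (n := n+1) e (by omega) (by simpa using hS)]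
        simp only [Nat.add_sub_cancel]
        try rw [← hw]
        try ring
/-- Monotone `k`-tuples with entries in `[b,c]`. -/
noncomputable def Mk (c : ℤ) (k : ℕ) (b : ℤ) : Finset (Fin k → ℤ) :=
  (Fintype.piFinset fun _ : Fin k => Finset.Icc b c).filter
    (fun y => ∀ i j : Fin k, i ≤ j → y i ≤ y j)

lemma mem_Mk {c b : ℤ} {k : ℕ} {y : Fin k → ℤ} :
    y ∈ Mk c k b ↔ (∀ i, y i ∈ Finset.Icc b c) ∧ ∀ i j : Fin k, i ≤ j → y i ≤ y j := by
  rw [Mk, Finset.mem_filter, Fintype.mem_piFinset]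

lemma cons_mono {k : ℕ} (t : ℤ) (z : Fin k → ℤ) (hlow : ∀ i, t ≤ z i)
    (hmono : ∀ i j : Fin k, i ≤ j → z i ≤ z j) :
    ∀ i j : Fin (k+1), i ≤ j → (Fin.cons t z : Fin (k+1) → ℤ) i ≤ (Fin.cons t z : Fin (k+1) → ℤ) j := by
  intro i
  refine Fin.cases ?_ ?_ i
  · intro j _
    refine Fin.cases ?_ ?_ j
    · exact le_refl _
    · intro j'
      rw [Fin.cons_zero, Fin.cons_succ]
      exact hlow j'
  · intro i' j
    refine Fin.cases ?_ ?_ j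
    · intro h
      exfalso
      rw [Fin.le_def] at h
      simp at h
    · intro j' h
      rw [Fin.cons_succ, Fin.cons_succ]
      refine hmono i' j' ?_
      rw [Fin.le_def] at h ⊢
      simpa using h

lemma Ch_eq_sum (g : ℕ → ℂ) (c : ℤ) :
    ∀ k m b, Ch g c k m b = ∑ y ∈ Mk c k b, ∏ i : Fin k, g (m + (i:ℕ)) ^ (y i) := by
  intro k
  induction k with
  | zero =>
      intro m b
      rw [Ch_zero]
      have h : Mk c 0 b = {fun i : Fin 0 => i.elim0} := by
        ext y
        simp only [Finset.mem_singleton, mem_Mk]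
        constructor
        · intro _; funext i; exact i.elim0
        · rintro rfl
          exact ⟨fun i => i.elim0, fun i => i.elim0⟩
      rw [h, Finset.sum_singleton]
      simp
  | succ k ih =>
      intro m b
      rw [Ch_succ]
      have hstep : ∀ t ∈ Finset.Icc b c,
          g m ^ t * Ch g c k (m+1) t
            = ∑ z ∈ Mk c k t, g m ^ t * ∏ i : Fin k, g (m + 1 + (i:ℕ)) ^ (z i) := by
        intro t _
        rw [ih (m+1) t, Finset.mul_sum]
      rw [Finset.sum_congr rfl hstep, Finset.sum_sigma' (Finset.Icc b c) (fun t => Mk c k t)]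
      refine Finset.sum_nbij' (i := fun p => Fin.cons p.1 p.2)
        (j := fun y => ⟨y 0, Fin.tail y⟩) ?_ ?_ ?_ ?_ ?_
      · rintro ⟨t, z⟩ hp
        dsimp only
        rw [Finset.mem_sigma] at hp
        obtain ⟨ht, hz⟩ := hp
        rw [mem_Mk] at hz ⊢
        obtain ⟨hz1, hz2⟩ := hz
        rw [Finset.mem_Icc] at ht
        constructor
        · intro i
          refine Fin.cases ?_ ?_ i
          · rw [Fin.cons_zero, Finset.mem_Icc]; exact ⟨ht.1, ht.2⟩
          · intro i'
            rw [Fin.cons_succ, Finset.mem_Icc]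
            have := Finset.mem_Icc.mp (hz1 i')
            exact ⟨le_trans ht.1 this.1, this.2⟩
        · exact cons_mono t z (fun i => (Finset.mem_Icc.mp (hz1 i)).1) hz2
      · intro y hy
        rw [mem_Mk] at hy
        obtain ⟨hy1, hy2⟩ := hy
        rw [Finset.mem_sigma]
        refine ⟨hy1 0, ?_⟩
        rw [mem_Mk]
        constructor
        · intro i
          rw [Finset.mem_Icc]
          have h1 := hy2 0 i.succ (Fin.zero_le _)
          have h2 := Finset.mem_Icc.mp (hy1 i.succ)
          exact ⟨h1, h2.2⟩
        · intro i j hij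
          exact hy2 i.succ j.succ (Fin.succ_le_succ_iff.mpr hij)
      · rintro ⟨t, z⟩ _
        simp [Fin.tail_cons]
      · intro y _
        exact Fin.cons_self_tail y
      · rintro ⟨t, z⟩ _
        dsimp only
        rw [Fin.prod_univ_succ, Fin.cons_zero]
        congr 1
        refine Finset.prod_congr rfl fun i _ => ?_
        rw [Fin.cons_succ, Fin.val_succ, show m + ((i:ℕ) + 1) = m + 1 + (i:ℕ) from by omega]
lemma strictMono_gap {n : ℕ} {X : Fin n → ℤ} (h : StrictMono X) (i j : Fin n) (hij : i ≤ j) :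
    X i + (((j:ℕ) - (i:ℕ) : ℕ) : ℤ) ≤ X j := by
  have key : ∀ d : ℕ, ∀ j : Fin n, (j:ℕ) = (i:ℕ) + d → X i + (d:ℤ) ≤ X j := by
    intro d
    induction d with
    | zero =>
        intro j hj
        have hji : i = j := Fin.ext (by omega)
        subst hji
        simp
    | succ d ih =>
        intro j hj
        have hlt : (i:ℕ) + d < n := by have := j.isLt; omega
        have h1 := ih ⟨(i:ℕ)+d, hlt⟩ rfl
        have h2 : X ⟨(i:ℕ)+d, hlt⟩ < X j := h (by rw [Fin.lt_def]; show (i:ℕ)+d < (j:ℕ); omega)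
        push_cast at h1 ⊢
        omega
  have hij' : (i:ℕ) ≤ (j:ℕ) := hij
  exact key ((j:ℕ) - (i:ℕ)) j (by omega)

lemma tsum_to_chain (f : ℕ → ℂ) (a : ℤ) (L M : ℕ) (h0 : 0 < M + 1) (hML : M + 1 < L) :
    (∑' X : {X : Fin (M+1) → ℤ // X ∈ XNL (M+1) L ∧ X (⟨0, h0⟩ : Fin (M+1)) = a},
        ∏ j : Fin (M+1), f ((j : ℕ) + 1) ^ (X.1 j - (((j : ℕ) : ℤ) + 1)))
      = f 1 ^ (a-1) * Ch f (a + (L:ℤ) - ((M:ℤ)+1) - 1) M 2 (a-1) := by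
  set c : ℤ := a + (L:ℤ) - ((M:ℤ)+1) - 1 with hc
  have hac : a - 1 ≤ c := by
    rw [hc]; push_cast; omega
  classical
  set A : Finset (Fin (M+1) → ℤ) :=
    (Fintype.piFinset fun _ : Fin (M+1) => Finset.Icc (a-1) c).filter
      (fun y => (∀ i j : Fin (M+1), i ≤ j → y i ≤ y j) ∧ y ⟨0, h0⟩ = a - 1) with hA
  have memA : ∀ y : Fin (M+1) → ℤ, y ∈ A ↔
      (∀ i, y i ∈ Finset.Icc (a-1) c) ∧
        (∀ i j : Fin (M+1), i ≤ j → y i ≤ y j) ∧ y ⟨0, h0⟩ = a - 1 := by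
    intro y
    rw [hA, Finset.mem_filter, Fintype.mem_piFinset]
  -- the equivalence with the configuration space
  let e : {X : Fin (M+1) → ℤ // X ∈ XNL (M+1) L ∧ X (⟨0, h0⟩ : Fin (M+1)) = a}
      ≃ {y : Fin (M+1) → ℤ // y ∈ A} :=
    { toFun := fun X => ⟨fun i => X.1 i - ((i:ℕ):ℤ) - 1, by
        obtain ⟨hX, hX0⟩ := X.2
        simp only [XNL, Set.mem_setOf_eq] at hX
        obtain ⟨hSM, hwin⟩ := hX
        have hlast : ∀ i : Fin (M+1), X.1 i + ((M:ℤ) - ((i:ℕ):ℤ)) ≤ X.1 ⟨M, by omega⟩ := by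
          intro i
          have hiM : (i:ℕ) ≤ M := by have := i.isLt; omega
          have := strictMono_gap hSM i ⟨M, by omega⟩ (by rw [Fin.le_def]; exact hiM)
          rwa [show ((⟨M, by omega⟩ : Fin (M+1)):ℕ) = M from rfl, Nat.cast_sub hiM] at this
        have hzero : ∀ i : Fin (M+1), a + ((i:ℕ):ℤ) ≤ X.1 i := by
          intro i
          have := strictMono_gap hSM ⟨0, h0⟩ i (by rw [Fin.le_def]; exact Nat.zero_le _)
          rwa [show ((⟨0, h0⟩ : Fin (M+1)):ℕ) = 0 from rfl, Nat.sub_zero, hX0] at this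
        have hwin0 : X.1 ⟨M, by omega⟩ < a + (L:ℤ) := by
          have := hwin ⟨M, by omega⟩ ⟨0, h0⟩
          rwa [hX0] at this
        rw [memA]
        refine ⟨?_, ?_, ?_⟩
        · intro i
          show X.1 i - ((i:ℕ):ℤ) - 1 ∈ Finset.Icc (a-1) c
          rw [Finset.mem_Icc]
          constructor
          · have := hzero i; omega
          · have h1 := hlast i
            rw [hc]
            omega
        · intro i j hij
          show X.1 i - ((i:ℕ):ℤ) - 1 ≤ X.1 j - ((j:ℕ):ℤ) - 1
          have hij' : (i:ℕ) ≤ (j:ℕ) := hij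
          have := strictMono_gap hSM i j hij
          rw [Nat.cast_sub hij'] at this
          omega
        · show X.1 ⟨0, h0⟩ - (((⟨0, h0⟩ : Fin (M+1)):ℕ):ℤ) - 1 = a - 1
          rw [hX0]
          norm_num⟩
      invFun := fun y => ⟨fun i => y.1 i + ((i:ℕ):ℤ) + 1, by
        obtain ⟨hpi, hmono, hy0⟩ := (memA y.1).mp y.2
        refine ⟨?_, ?_⟩
        · simp only [XNL, Set.mem_setOf_eq]
          refine ⟨?_, ?_⟩
          · rw [Fin.strictMono_iff_lt_succ]
            intro i
            show y.1 i.castSucc + ((i.castSucc:ℕ):ℤ) + 1 < y.1 i.succ + ((i.succ:ℕ):ℤ) + 1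
            have h1 := hmono i.castSucc i.succ
              (by rw [Fin.le_def, Fin.coe_castSucc, Fin.val_succ]; omega)
            have h2 : ((i.castSucc : ℕ) : ℤ) = ((i:ℕ):ℤ) := by rw [Fin.coe_castSucc]
            have h3 : ((i.succ : ℕ) : ℤ) = ((i:ℕ):ℤ) + 1 := by
              rw [Fin.val_succ]; push_cast; ring
            rw [h2, h3]
            omega
          · intro i j
            show y.1 i + ((i:ℕ):ℤ) + 1 < y.1 j + ((j:ℕ):ℤ) + 1 + (L:ℤ)
            have hi := Finset.mem_Icc.mp (hpi i)
            have hj0 := hmono ⟨0, h0⟩ j (by rw [Fin.le_def]; exact Nat.zero_le _)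
            rw [hy0] at hj0
            have hiM : (i:ℕ) ≤ M := by have := i.isLt; omega
            have hjpos : (0:ℤ) ≤ ((j:ℕ):ℤ) := by positivity
            rw [hc] at hi
            have hiZ : ((i:ℕ):ℤ) ≤ (M:ℤ) := by exact_mod_cast hiM
            omega
        · show y.1 ⟨0, h0⟩ + (((⟨0, h0⟩ : Fin (M+1)):ℕ):ℤ) + 1 = a
          rw [hy0]
          norm_num⟩
      left_inv := fun X => Subtype.ext (funext fun i => by
        show (X.1 i - ((i:ℕ):ℤ) - 1) + ((i:ℕ):ℤ) + 1 = X.1 i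
        ring)
      right_inv := fun y => Subtype.ext (funext fun i => by
        show (y.1 i + ((i:ℕ):ℤ) + 1) - ((i:ℕ):ℤ) - 1 = y.1 i
        ring) }
  -- transport the tsum through the equivalence
  rw [← Equiv.tsum_eq e.symm, tsum_fintype]
  have hval : ∀ y : {y : Fin (M+1) → ℤ // y ∈ A},
      (∏ j : Fin (M+1), f ((j : ℕ) + 1) ^ ((e.symm y).1 j - (((j : ℕ) : ℤ) + 1)))
        = ∏ j : Fin (M+1), f ((j : ℕ) + 1) ^ (y.1 j) := by
    intro y
    refine Finset.prod_congr rfl fun j _ => ?_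
    congr 1
    show (y.1 j + ((j:ℕ):ℤ) + 1) - (((j:ℕ):ℤ) + 1) = y.1 j
    ring
  rw [Finset.sum_congr rfl (fun y _ => hval y)]
  rw [Finset.sum_coe_sort A (fun y => ∏ j : Fin (M+1), f ((j : ℕ) + 1) ^ (y j))]
  -- now peel off the pinned first coordinate
  rw [Ch_eq_sum f c M 2 (a-1), Finset.mul_sum]
  refine Finset.sum_nbij' (i := fun y => Fin.tail y) (j := fun z => Fin.cons (a-1) z)
    ?_ ?_ ?_ ?_ ?_
  · intro y hy
    obtain ⟨hpi, hmono, hy0⟩ := (memA y).mp hy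
    rw [mem_Mk]
    constructor
    · intro i
      exact hpi i.succ
    · intro i j hij
      exact hmono i.succ j.succ (Fin.succ_le_succ_iff.mpr hij)
  · intro z hz
    rw [mem_Mk] at hz
    obtain ⟨hz1, hz2⟩ := hz
    rw [memA]
    refine ⟨?_, ?_, ?_⟩
    · intro i
      show (Fin.cons (a-1) z : Fin (M+1) → ℤ) i ∈ Finset.Icc (a-1) c
      refine Fin.cases ?_ ?_ i
      · rw [Fin.cons_zero, Finset.mem_Icc]
        exact ⟨le_refl _, hac⟩
      · intro i'
        rw [Fin.cons_succ]
        exact hz1 i'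
    · exact cons_mono (a-1) z (fun i => (Finset.mem_Icc.mp (hz1 i)).1) hz2
    · exact Fin.cons_zero _ _
  · intro y hy
    obtain ⟨hpi, hmono, hy0⟩ := (memA y).mp hy
    funext i
    show (Fin.cons (a-1) (Fin.tail y) : Fin (M+1) → ℤ) i = y i
    refine Fin.cases ?_ ?_ i
    · rw [Fin.cons_zero]
      exact hy0.symm
    · intro i'
      rw [Fin.cons_succ]
      rfl
  · intro z _
    exact Fin.tail_cons _ _
  · intro y hy
    obtain ⟨hpi, hmono, hy0⟩ := (memA y).mp hy
    rw [Fin.prod_univ_succ]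
    congr 1
    · have hy0' : y (0 : Fin (M+1)) = a - 1 := hy0
      rw [hy0', Fin.val_zero]
    · refine Finset.prod_congr rfl fun i _ => ?_
      show f ((i.succ : ℕ) + 1) ^ (y i.succ) = f (2 + (i:ℕ)) ^ (Fin.tail y i)
      rw [show Fin.tail y i = y i.succ from rfl, Fin.val_succ,
        show (i:ℕ) + 1 + 1 = 2 + (i:ℕ) from by omega]
/-- first block -/
noncomputable def FB (f : ℕ → ℂ) (a : ℤ) (q : ℕ) : ℂ :=
  (Fp f 1 (q-1)) ^ (a-1) / ∏ j ∈ Finset.Icc 2 (q-1), (1 - Fp f j (q-1))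

/-- later block -/
noncomputable def Bb (f : ℕ → ℂ) (c : ℤ) (p q : ℕ) : ℂ :=
  (Fp f p (q-1)) ^ c /
    ((1 - (Fp f p (q-1))⁻¹) * ∏ j ∈ Finset.Icc (p+1) (q-1), (1 - Fp f j (q-1)))

/-- The right-hand-side term, with general top parameter `E`. -/
noncomputable def RT (f : ℕ → ℂ) (a c : ℤ) (S : Finset ℕ) (E : ℕ) : ℂ :=
  let s : Fin (S.card + 1) → ℕ := fun i =>
    if h : (i : ℕ) < S.card then S.orderEmbOfFin rfl ⟨(i : ℕ), h⟩ else E + 1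
  ((∏ j ∈ Finset.Icc 1 (s 0 - 1), f j) ^ (a - 1) /
      ∏ j ∈ Finset.Icc 2 (s 0 - 1), (1 - ∏ j' ∈ Finset.Icc j (s 0 - 1), f j')) *
    ∏ i : Fin S.card,
      (∏ j ∈ Finset.Icc (s i.castSucc) (s i.succ - 1), f j) ^ c /
        ((1 - (∏ j ∈ Finset.Icc (s i.castSucc) (s i.succ - 1), f j)⁻¹) *
          ∏ j ∈ Finset.Icc (s i.castSucc + 1) (s i.succ - 1),
            (1 - ∏ j' ∈ Finset.Icc j (s i.succ - 1), f j'))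

lemma RT_repr (f : ℕ → ℂ) (a c : ℤ) (S : Finset ℕ) (E : ℕ) {k : ℕ} (h : S.card = k)
    (s : Fin (k+1) → ℕ)
    (hs : ∀ i : Fin (k+1),
      s i = if hh : (i : ℕ) < k then S.orderEmbOfFin h ⟨(i : ℕ), hh⟩ else E + 1) :
    RT f a c S E = FB f a (s 0) * ∏ i : Fin k, Bb f c (s i.castSucc) (s i.succ) := by
  subst h
  rw [show s = fun i : Fin (S.card + 1) =>
      if hh : (i : ℕ) < S.card then S.orderEmbOfFin rfl ⟨(i : ℕ), hh⟩ else E + 1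
    from funext hs]
  rfl

lemma RT_empty (f : ℕ → ℂ) (a c : ℤ) (E : ℕ) : RT f a c ∅ E = FB f a (E+1) := by
  rw [RT_repr f a c ∅ E (Finset.card_empty) (fun _ => E+1)
    (by intro i; rw [dif_neg (by simp)])]
  simp

lemma W_empty (f : ℕ → ℂ) (a c : ℤ) (E : ℕ) : W f a c ∅ E E = FB f a (E+1) := by
  rw [W, FB, nxt_top (j := 1) (by simp) E]
  have h1 : ∀ j ∈ Finset.Icc 2 E,
      (if j ∈ (∅ : Finset ℕ) then (Fp f j (nxt ∅ E j)) ^ c * (1 - (Fp f j (nxt ∅ E j))⁻¹)⁻¹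
       else (1 - Fp f j (nxt ∅ E j))⁻¹) = (1 - Fp f j E)⁻¹ := by
    intro j _
    rw [if_neg (Finset.notMem_empty j), nxt_top (j := j) (by simp) E]
  rw [Finset.prod_congr rfl h1, Nat.add_sub_cancel, div_eq_mul_inv, ← Finset.prod_inv_distrib]

/-- The key structural identity between the two per-subset term shapes. -/
lemma RT_eq_W (f : ℕ → ℂ) (a c : ℤ) :
    ∀ (k : ℕ) (S : Finset ℕ) (E : ℕ), S.card = k → 1 ≤ E → S ⊆ Finset.Icc 2 E →
      RT f a c S E = W f a c S E E := by
  intro k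
  induction k with
  | zero =>
      intro S E hcard _ _
      rw [Finset.card_eq_zero.mp hcard, RT_empty, W_empty]
  | succ k ih =>
      intro S E hcard hE hSE
      have hne : S.Nonempty := by
        rw [← Finset.card_pos, hcard]; omega
      set m := S.max' hne with hm
      set S' := S.erase m with hS'
      have hmS : m ∈ S := S.max'_mem hne
      have hmm : 2 ≤ m ∧ m ≤ E := by
        have := Finset.mem_Icc.mp (hSE hmS); exact this
      have hmnot : m ∉ S' := Finset.notMem_erase m S
      have hins : S = insert m S' := (Finset.insert_erase hmS).symm
      have hS'lt : ∀ x ∈ S', x < m := by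
        intro x hx
        have hxS : x ∈ S := Finset.mem_of_mem_erase hx
        have hxle := S.le_max' x hxS
        have hxne : x ≠ m := Finset.ne_of_mem_erase hx
        omega
      have hS'sub : S' ⊆ Finset.Icc 2 (m-1) := by
        intro x hx
        have hxS : x ∈ S := Finset.mem_of_mem_erase hx
        have h2 := Finset.mem_Icc.mp (hSE hxS)
        rw [Finset.mem_Icc]
        have := hS'lt x hx
        omega
      have hcard' : S'.card = k := by
        have h2 : S'.card = S.card - 1 := by
          rw [hS']
          exact Finset.card_erase_of_mem hmS
        have h3 : 1 ≤ S.card := by omega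
        omega
      have hcardS : S.card = k + 1 := hcard
      -- the enumeration of S = insert m S' splits
      have hOE : ∀ (v : ℕ) (hv : v < k+1),
          S.orderEmbOfFin hcardS ⟨v, hv⟩
            = if h : v < k then S'.orderEmbOfFin hcard' ⟨v, h⟩ else m := by
        have hmem : ∀ x : Fin (k+1),
            (if h : (x:ℕ) < k then S'.orderEmbOfFin hcard' ⟨(x:ℕ), h⟩ else m) ∈ S := by
          intro x
          by_cases h : (x:ℕ) < k
          · rw [dif_pos h, hins]
            exact Finset.mem_insert_of_mem (Finset.orderEmbOfFin_mem S' hcard' _)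
          · rw [dif_neg h]
            exact hmS
        have hmono : StrictMono (fun x : Fin (k+1) =>
            if h : (x:ℕ) < k then S'.orderEmbOfFin hcard' ⟨(x:ℕ), h⟩ else m) := by
          intro x y hxy
          have hxy' : (x:ℕ) < (y:ℕ) := hxy
          dsimp only
          by_cases hx : (x:ℕ) < k
          · by_cases hy : (y:ℕ) < k
            · rw [dif_pos hx, dif_pos hy]
              exact (S'.orderEmbOfFin hcard').strictMono (by rw [Fin.mk_lt_mk]; omega)
            · rw [dif_pos hx, dif_neg hy]
              exact hS'lt _ (Finset.orderEmbOfFin_mem S' hcard' _)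
          · exfalso
            have := y.isLt
            omega
        have := Finset.orderEmbOfFin_unique hcardS hmem hmono
        intro v hv
        exact (congrFun this ⟨v, hv⟩).symm
      -- two explicit enumerations
      set sT : Fin (k+2) → ℕ := fun i =>
        if hh : (i:ℕ) < k then S'.orderEmbOfFin hcard' ⟨(i:ℕ), hh⟩
        else if (i:ℕ) < k+1 then m else E + 1 with hsTdef
      set sS : Fin (k+1) → ℕ := fun i =>
        if hh : (i:ℕ) < k then S'.orderEmbOfFin hcard' ⟨(i:ℕ), hh⟩ else m with hsSdef
      have hT : RT f a c S E = FB f a (sT 0) * ∏ i : Fin (k+1), Bb f c (sT i.castSucc) (sT i.succ) := by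
        refine RT_repr f a c S E hcardS sT ?_
        intro i
        by_cases h : (i:ℕ) < k+1
        · rw [dif_pos h, hOE _ h, hsTdef]
          by_cases hh : (i:ℕ) < k
          · rw [dif_pos hh]
            simp only [dif_pos hh]
          · rw [dif_neg hh]
            simp only [dif_neg hh, if_pos h]
        · rw [dif_neg h, hsTdef]
          simp only [dif_neg (show ¬ (i:ℕ) < k by omega), if_neg h]
      have hS'repr : RT f a c S' (m-1)
          = FB f a (sS 0) * ∏ i : Fin k, Bb f c (sS i.castSucc) (sS i.succ) := by
        refine RT_repr f a c S' (m-1) hcard' sS ?_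
        intro i
        rw [hsSdef]
        by_cases hh : (i:ℕ) < k
        · simp only [dif_pos hh]
        · simp only [dif_neg hh]
          omega
      -- evaluations
      have e0 : sT 0 = sS 0 := by
        rw [hsTdef, hsSdef]
        simp only [Fin.val_zero]
        by_cases h : 0 < k
        · simp [h]
        · simp [h]
      have ecc : ∀ i : Fin k, sT i.castSucc.castSucc = sS i.castSucc := by
        intro i
        rw [hsTdef, hsSdef]
        simp only [Fin.coe_castSucc]
        rw [dif_pos i.isLt, dif_pos i.isLt]
      have ecs : ∀ i : Fin k, sT i.castSucc.succ = sS i.succ := by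
        intro i
        rw [hsTdef, hsSdef]
        simp only [Fin.val_succ, Fin.coe_castSucc]
        by_cases h : (i:ℕ) + 1 < k
        · rw [dif_pos h, dif_pos h]
        · rw [dif_neg h, dif_neg h, if_pos (by have := i.isLt; omega)]
      have el1 : sT (Fin.last k).castSucc = m := by
        rw [hsTdef]
        simp only [Fin.coe_castSucc, Fin.val_last]
        rw [dif_neg (lt_irrefl k), if_pos (by omega)]
      have el2 : sT (Fin.last k).succ = E + 1 := by
        rw [hsTdef]
        simp only [Fin.val_succ, Fin.val_last]
        rw [dif_neg (by omega), if_neg (by omega)]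
      -- put everything together
      rw [hins, W_max f a c hmm.1 hS'sub hmm.2, ← hins, ← ih S' (m-1) hcard' (by omega) hS'sub,
        hT, Fin.prod_univ_castSucc, hS'repr]
      have hprod : ∀ i : Fin k,
          Bb f c (sT i.castSucc.castSucc) (sT i.castSucc.succ)
            = Bb f c (sS i.castSucc) (sS i.succ) := by
        intro i
        rw [ecc i, ecs i]
      rw [Finset.prod_congr rfl (fun i _ => hprod i), el1, el2, e0]
      have hBb : Bb f c m (E+1)
          = (Fp f m E) ^ c * (1 - (Fp f m E)⁻¹)⁻¹ * ∏ j ∈ Finset.Icc (m+1) E, (1 - Fp f j E)⁻¹ := by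
        rw [Bb, Nat.add_sub_cancel, div_eq_mul_inv, mul_inv, ← Finset.prod_inv_distrib]
        ring
      rw [hBb]
      ring

end SumX1

open SumX1 in
/-- Geometric-type summation formula: the sum of `∏_{j=1}^N f_j^{x_j-j}` over
`X ∈ 𝒳_N(L)` with `x_1 = a`, expressed as a sum over the subsets
`{s_1 < ⋯ < s_k} ⊆ {2,…,N}` (with the convention `s_{k+1} = N+1`).
Here `f : ℕ → ℂ` with the relevant values `f 1, …, f N`, and
`F_{m,n} = ∏_{j=m}^n f_j`. -/
theorem sum_x1_eq_a_prod_pow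
    (N L : ℕ) (hN : 1 ≤ N) (hNL : N < L) (a : ℤ)
    (f : ℕ → ℂ) (hf : ∀ j, 1 ≤ j → j ≤ N → f j ≠ 0)
    (hF : ∀ m n, 2 ≤ m → m ≤ n → n ≤ N → (∏ j ∈ Finset.Icc m n, f j) ≠ 1) :
    (∑' X : {X : Fin N → ℤ // X ∈ XNL N L ∧ X (⟨0, hN⟩ : Fin N) = a},
        ∏ j : Fin N, f ((j : ℕ) + 1) ^ (X.1 j - (((j : ℕ) : ℤ) + 1))) =
      ∑ S ∈ (Finset.Icc 2 N).powerset,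
        (let s : Fin (S.card + 1) → ℕ := fun i =>
          if h : (i : ℕ) < S.card then S.orderEmbOfFin rfl ⟨(i : ℕ), h⟩ else N + 1
        ((∏ j ∈ Finset.Icc 1 (s 0 - 1), f j) ^ (a - 1) /
            ∏ j ∈ Finset.Icc 2 (s 0 - 1), (1 - ∏ j' ∈ Finset.Icc j (s 0 - 1), f j')) *
          ∏ i : Fin S.card,
            (∏ j ∈ Finset.Icc (s i.castSucc) (s i.succ - 1), f j) ^ (a + (L : ℤ) - N - 1) /
              ((1 - (∏ j ∈ Finset.Icc (s i.castSucc) (s i.succ - 1), f j)⁻¹) *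
                ∏ j ∈ Finset.Icc (s i.castSucc + 1) (s i.succ - 1),
                  (1 - ∏ j' ∈ Finset.Icc j (s i.succ - 1), f j'))) := by
  obtain ⟨M, rfl⟩ : ∃ M, N = M + 1 := ⟨N - 1, by omega⟩
  set c : ℤ := a + (L : ℤ) - ((M+1 : ℕ) : ℤ) - 1 with hc
  have hcast : ((M+1 : ℕ) : ℤ) = (M : ℤ) + 1 := by push_cast; ring
  have hceq : c = a + (L:ℤ) - ((M:ℤ)+1) - 1 := by rw [hc, hcast]
  have hL : (∑' X : {X : Fin (M+1) → ℤ // X ∈ XNL (M+1) L ∧ X (⟨0, hN⟩ : Fin (M+1)) = a},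
        ∏ j : Fin (M+1), f ((j : ℕ) + 1) ^ (X.1 j - (((j : ℕ) : ℤ) + 1)))
      = f 1 ^ (a-1) * Ch f c M 2 (a-1) := by
    rw [hceq]
    exact tsum_to_chain f a L M hN hNL
  rw [hL]
  -- the RHS terms are the `RT` terms
  have hRT : ∀ S ∈ (Finset.Icc 2 (M+1)).powerset,
      (let s : Fin (S.card + 1) → ℕ := fun i =>
        if h : (i : ℕ) < S.card then S.orderEmbOfFin rfl ⟨(i : ℕ), h⟩ else (M+1) + 1
      ((∏ j ∈ Finset.Icc 1 (s 0 - 1), f j) ^ (a - 1) /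
          ∏ j ∈ Finset.Icc 2 (s 0 - 1), (1 - ∏ j' ∈ Finset.Icc j (s 0 - 1), f j')) *
        ∏ i : Fin S.card,
          (∏ j ∈ Finset.Icc (s i.castSucc) (s i.succ - 1), f j) ^ c /
            ((1 - (∏ j ∈ Finset.Icc (s i.castSucc) (s i.succ - 1), f j)⁻¹) *
              ∏ j ∈ Finset.Icc (s i.castSucc + 1) (s i.succ - 1),
                (1 - ∏ j' ∈ Finset.Icc j (s i.succ - 1), f j')))
        = RT f a c S (M+1) := fun S _ => rfl
  rw [Finset.sum_congr rfl hRT]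
  rcases Nat.eq_zero_or_pos M with rfl | hM
  · -- N = 1
    rw [Ch_zero, mul_one]
    have hIcc : Finset.Icc 2 (0+1) = (∅ : Finset ℕ) := by
      ext x; simp only [Finset.mem_Icc, Finset.notMem_empty, iff_false]; omega
    rw [hIcc, Finset.powerset_empty, Finset.sum_singleton, RT_empty, FB]
    have h1 : (0:ℕ)+1+1-1 = 1 := rfl
    rw [h1]
    have h2 : Finset.Icc 2 1 = (∅ : Finset ℕ) := by
      ext x; simp only [Finset.mem_Icc, Finset.notMem_empty, iff_false]; omega
    rw [h2, Finset.prod_empty, div_one, Fp_self]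
  · -- N ≥ 2
    have hac : a - 1 ≤ c := by
      rw [hceq]
      have : (M:ℤ) + 1 < (L:ℤ) := by exact_mod_cast hNL
      omega
    have hmain := main f a c hf (fun m n h1 h2 h3 => hF m n h1 h2 h3) hac (M+1)
      (by omega) (M+1) le_rfl le_rfl
    have hCh : Ch (Function.update f (M+1) (Fp f (M+1) (M+1))) c ((M+1)-1) 2 (a-1)
        = Ch f c M 2 (a-1) := by
      rw [show (M+1)-1 = M from rfl]
      apply Ch_congr
      intro j hj1 hj2
      rcases eq_or_ne j (M+1) with rfl | hne
      · rw [Function.update_self, Fp_self]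
      · rw [Function.update_of_ne hne]
    rw [← hCh, hmain]
    refine Finset.sum_congr rfl fun S hS => ?_
    exact (RT_eq_W f a c S.card S (M+1) rfl (by omega) (Finset.mem_powerset.mp hS)).symm
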